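/- Let V be a finite-dimensional complex vector space and k: H_+^R → V holomorphic with an asymptotic expansion k(z) ~ Σ_{n≥0} k_n z^{−n} valid in sectors δ < arg z < π − δ, and suppose k₀ ≠ 0. Then the equation h'(z) = k(z)/z (i.e. λ = 0) has no holomorphic solution h on H_+^R tending to 0 at infinity in all such sectors. -/

import Mathlib

open Filter

/-- The filter of `z → ∞` within the sector `δ < arg z < π − δ`. -/
noncomputable def sectorFilter12 (δ : ℝ) : Filter ℂ :=
  (Filter.comap (fun z : ℂ => ‖z‖) Filter.atTop) ⊓
    Filter.principal {z : ℂ | δ < Complex.arg z ∧ Complex.arg z < Real.pi - δ}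

/-- If `k` has an asymptotic expansion `k(z) ~ Σ_{n≥0} k_n z^{−n}` on the
sectors of `H₊^R` with `k₀ ≠ 0`, the equation `h' = k/z` (the case `λ = 0`)
has no holomorphic solution tending to `0` at `∞` in all sectors. -/
theorem stmt12 {V : Type*} [NormedAddCommGroup V] [NormedSpace ℂ V]
    [FiniteDimensional ℂ V]
    (R : ℝ) (hR : 0 ≤ R) (k : ℂ → V)
    (hk : DifferentiableOn ℂ k {z : ℂ | 0 < z.im ∧ R < ‖z‖})
    (kc : ℕ → V) (hk0 : kc 0 ≠ 0)
    (hasy : ∀ δ > 0, ∀ n : ℕ, ∃ C : ℝ, ∀ z : ℂ,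
      (0 < z.im ∧ R < ‖z‖) →
      (δ < Complex.arg z ∧ Complex.arg z < Real.pi - δ) →
      ‖k z - ∑ m ∈ Finset.range (n + 1), (z ^ m)⁻¹ • kc m‖ ≤
        C * (‖z‖) ^ (-(n + 1 : ℤ))) :
    ¬ ∃ h : ℂ → V,
        (∀ z ∈ {z : ℂ | 0 < z.im ∧ R < ‖z‖},
          HasDerivAt h (z⁻¹ • k z) z) ∧
        (∀ δ > 0, Tendsto h (sectorFilter12 δ) (nhds 0)) := by
  rintro ⟨h, hderiv, hlim⟩
  obtain ⟨C, hC⟩ := hasy 1 one_pos 0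
  set C' := max C 0 with hC'def
  have hC'0 : (0:ℝ) ≤ C' := le_max_right _ _
  have hpi : (1:ℝ) < Real.pi / 2 := by
    have := Real.pi_gt_three; linarith
  have habs : ∀ t : ℝ, 0 ≤ t → ‖((t:ℂ) * Complex.I)‖ = t := by
    intro t ht
    simp [Complex.norm_real, abs_of_nonneg ht]
  have harg : ∀ t : ℝ, 0 < t → Complex.arg ((t:ℂ) * Complex.I) = Real.pi / 2 := by
    intro t ht
    rw [Complex.arg_real_mul _ ht, Complex.arg_I]
  have hmaxpos : (0:ℝ) < max R 1 := lt_of_lt_of_le one_pos (le_max_right _ _)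
  have hmem : ∀ t : ℝ, max R 1 < t →
      (0 < ((t:ℂ) * Complex.I).im ∧ R < ‖((t:ℂ) * Complex.I)‖) := by
    intro t ht
    have ht1 : (0:ℝ) < t := hmaxpos.trans ht
    refine ⟨by simp [Complex.mul_im, ht1], ?_⟩
    rw [habs t ht1.le]
    exact lt_of_le_of_lt (le_max_left R 1) ht
  -- bound on the error along the imaginary axis
  have hkb : ∀ t : ℝ, max R 1 < t → ‖k ((t:ℂ) * Complex.I) - kc 0‖ ≤ C' * t⁻¹ := by
    intro t ht
    have ht1 : (0:ℝ) < t := hmaxpos.trans ht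
    have hb := hC ((t:ℂ) * Complex.I) (hmem t ht)
      ⟨by rw [harg t ht1]; exact hpi, by rw [harg t ht1]; linarith⟩
    rw [habs t ht1.le] at hb
    simp only [zero_add, Finset.range_one, Finset.sum_singleton, pow_zero, inv_one, one_smul,
      Nat.cast_zero, zpow_neg, zpow_one] at hb
    exact hb.trans (mul_le_mul_of_nonneg_right (le_max_left _ _) (inv_nonneg.2 ht1.le))
  -- derivative of g(t) = h(t i)
  have hg : ∀ t : ℝ, max R 1 < t →
      HasDerivAt (fun s : ℝ => h ((s:ℂ) * Complex.I)) (((t:ℂ))⁻¹ • k ((t:ℂ) * Complex.I)) t := by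
    intro t ht
    have ht1 : (0:ℝ) < t := hmaxpos.trans ht
    have hc : HasDerivAt (fun s : ℝ => (s:ℂ) * Complex.I) Complex.I t := by
      simpa [Complex.ofRealCLM_apply] using (Complex.ofRealCLM.hasDerivAt (x := t)).mul_const Complex.I
    have hh := hderiv ((t:ℂ) * Complex.I) (hmem t ht)
    have hcomp := HasDerivAt.scomp t hh hc
    have heq : Complex.I • (((t:ℂ) * Complex.I)⁻¹ • k ((t:ℂ) * Complex.I))
        = ((t:ℂ))⁻¹ • k ((t:ℂ) * Complex.I) := by
      rw [smul_smul]
      congr 1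
      have htc : (t:ℂ) ≠ 0 := by exact_mod_cast ht1.ne'
      field_simp
    rw [heq] at hcomp
    exact hcomp
  -- the key integral estimate
  have key : ∀ T t : ℝ, max R 1 < T → T ≤ t →
      ‖(h ((t:ℂ) * Complex.I) - Real.log t • kc 0)
        - (h ((T:ℂ) * Complex.I) - Real.log T • kc 0)‖ ≤ C' / T := by
    intro T t hT hTt
    have hT0 : (0:ℝ) < T := hmaxpos.trans hT
    have huIcc : Set.uIcc T t = Set.Icc T t := Set.uIcc_of_le hTt
    have hF : ∀ s ∈ Set.uIcc T t,
        HasDerivAt (fun s : ℝ => h ((s:ℂ) * Complex.I) - Real.log s • kc 0)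
          (((s:ℂ))⁻¹ • (k ((s:ℂ) * Complex.I) - kc 0)) s := by
      intro s hs
      rw [huIcc] at hs
      have hs1 : max R 1 < s := lt_of_lt_of_le hT hs.1
      have hs0 : (0:ℝ) < s := hmaxpos.trans hs1
      have h1 := hg s hs1
      have h2 : HasDerivAt (fun s : ℝ => Real.log s • kc 0) (s⁻¹ • kc 0) s :=
        (Real.hasDerivAt_log hs0.ne').smul_const (kc 0)
      have h3 := h1.sub h2
      have heq : ((s:ℂ))⁻¹ • k ((s:ℂ) * Complex.I) - s⁻¹ • kc 0
          = ((s:ℂ))⁻¹ • (k ((s:ℂ) * Complex.I) - kc 0) := by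
        rw [smul_sub]
        congr 1
        rw [← Complex.coe_smul, Complex.ofReal_inv]
      rw [← heq]
      exact h3
    have hcont : ContinuousOn (fun s : ℝ => ((s:ℂ))⁻¹ • (k ((s:ℂ) * Complex.I) - kc 0))
        (Set.uIcc T t) := by
      rw [huIcc]
      apply ContinuousOn.smul
      · apply ContinuousOn.inv₀ (Complex.continuous_ofReal.continuousOn)
        intro s hs
        have : (0:ℝ) < s := hT0.trans_le hs.1
        exact_mod_cast this.ne'
      · apply ContinuousOn.sub _ continuousOn_const
        apply hk.continuousOn.comp
        · exact (Complex.continuous_ofReal.mul continuous_const).continuousOn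
        · intro s hs
          exact hmem s (lt_of_lt_of_le hT hs.1)
    have hint : IntervalIntegrable (fun s : ℝ => ((s:ℂ))⁻¹ • (k ((s:ℂ) * Complex.I) - kc 0))
        MeasureTheory.volume T t := hcont.intervalIntegrable
    have hFTC := intervalIntegral.integral_eq_sub_of_hasDerivAt hF hint
    rw [← hFTC]
    have hBcont : ContinuousOn (fun s : ℝ => C' / s ^ 2) (Set.uIcc T t) := by
      rw [huIcc]
      apply ContinuousOn.div continuousOn_const (by fun_prop)
      intro s hs
      have : (0:ℝ) < s := hT0.trans_le hs.1
      positivity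
    have hBint : IntervalIntegrable (fun s : ℝ => C' / s ^ 2) MeasureTheory.volume T t :=
      hBcont.intervalIntegrable
    have hbound : ‖∫ s in T..t, ((s:ℂ))⁻¹ • (k ((s:ℂ) * Complex.I) - kc 0)‖
        ≤ |∫ s in T..t, C' / s ^ 2| := by
      apply intervalIntegral.norm_integral_le_abs_of_norm_le _ hBint
      filter_upwards [MeasureTheory.ae_restrict_mem measurableSet_uIoc] with s hs
      rw [Set.uIoc_of_le hTt] at hs
      have hs1 : max R 1 < s := lt_of_lt_of_le hT hs.1.le
      have hs0 : (0:ℝ) < s := hmaxpos.trans hs1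
      rw [norm_smul]
      have habs2 : ‖((s:ℂ))⁻¹‖ = s⁻¹ := by
        rw [norm_inv, Complex.norm_real, Real.norm_eq_abs, abs_of_pos hs0]
      rw [habs2]
      calc s⁻¹ * ‖k ((s:ℂ) * Complex.I) - kc 0‖ ≤ s⁻¹ * (C' * s⁻¹) := by
            exact mul_le_mul_of_nonneg_left (hkb s hs1) (inv_nonneg.2 hs0.le)
        _ = C' / s ^ 2 := by
            rw [div_eq_mul_inv, sq, mul_inv]
            ring
    have hBval : (∫ s in T..t, C' / s ^ 2) = C' / T - C' / t := by
      have hB : ∀ s ∈ Set.uIcc T t, HasDerivAt (fun s : ℝ => -C' / s) (C' / s ^ 2) s := by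
        intro s hs
        rw [huIcc] at hs
        have hs0 : (0:ℝ) < s := hT0.trans_le hs.1
        have hD := (hasDerivAt_inv hs0.ne').const_mul (-C')
        have heq1 : (fun s : ℝ => -C' / s) = fun x : ℝ => -C' * x⁻¹ := by
          funext x; ring
        have heq2 : C' / s ^ 2 = -C' * -(s ^ 2)⁻¹ := by ring
        rw [heq1, heq2]
        exact hD
      rw [intervalIntegral.integral_eq_sub_of_hasDerivAt hB hBint]
      ring
    have ht0 : (0:ℝ) < t := hT0.trans_le hTt
    have hfin : |∫ s in T..t, C' / s ^ 2| ≤ C' / T := by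
      rw [hBval, abs_of_nonneg]
      · have : 0 ≤ C' / t := by positivity
        linarith
      · have h1 : C' / t ≤ C' / T := by
          gcongr
        linarith
    exact hbound.trans hfin
  -- g tends to 0 along atTop
  have hg0 : Tendsto (fun t : ℝ => h ((t:ℂ) * Complex.I)) atTop (nhds 0) := by
    apply (hlim 1 one_pos).comp
    unfold sectorFilter12
    rw [tendsto_inf]
    constructor
    · rw [tendsto_comap_iff]
      apply Tendsto.congr' _ tendsto_id
      filter_upwards [eventually_ge_atTop (0:ℝ)] with t ht
      exact (habs t ht).symm
    · rw [tendsto_principal]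
      filter_upwards [eventually_gt_atTop (0:ℝ)] with t ht
      have harg' := harg t ht
      simp only [Set.mem_setOf_eq, harg']
      exact ⟨hpi, by linarith⟩
  -- final contradiction
  set T := max R 1 + 1 with hTdef
  have hT : max R 1 < T := lt_add_one _
  have hT0 : (0:ℝ) < T := hmaxpos.trans hT
  have hkn : (0:ℝ) < ‖kc 0‖ := norm_pos_iff.2 hk0
  set M : ℝ := 1 + ‖h ((T:ℂ) * Complex.I)‖ + C' / T with hMdef
  have hev1 : ∀ᶠ t : ℝ in atTop, ‖h ((t:ℂ) * Complex.I)‖ < 1 :=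
    (NormedAddCommGroup.tendsto_nhds_zero.mp hg0) 1 one_pos
  have hev2 : ∀ᶠ t : ℝ in atTop, Real.log T + M / ‖kc 0‖ < Real.log t :=
    Real.tendsto_log_atTop.eventually_gt_atTop _
  have hev3 : ∀ᶠ t : ℝ in atTop, T ≤ t := eventually_ge_atTop T
  obtain ⟨t, h1, h2, h3⟩ := (hev1.and (hev2.and hev3)).exists
  have hkey := key T t hT h3
  have hlog : Real.log T ≤ Real.log t := Real.log_le_log hT0 h3
  have hnorm : (Real.log t - Real.log T) * ‖kc 0‖
      ≤ ‖h ((t:ℂ) * Complex.I)‖ + ‖h ((T:ℂ) * Complex.I)‖ + C' / T := by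
    have e1 : (Real.log t - Real.log T) • kc 0
        = (h ((t:ℂ) * Complex.I) - h ((T:ℂ) * Complex.I))
          - ((h ((t:ℂ) * Complex.I) - Real.log t • kc 0)
            - (h ((T:ℂ) * Complex.I) - Real.log T • kc 0)) := by
      rw [sub_smul]; abel
    have e2 : ‖(Real.log t - Real.log T) • kc 0‖ = (Real.log t - Real.log T) * ‖kc 0‖ := by
      rw [norm_smul, Real.norm_eq_abs, abs_of_nonneg (by linarith)]
    have e3 : ‖(Real.log t - Real.log T) • kc 0‖
        ≤ ‖h ((t:ℂ) * Complex.I) - h ((T:ℂ) * Complex.I)‖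
          + ‖(h ((t:ℂ) * Complex.I) - Real.log t • kc 0)
            - (h ((T:ℂ) * Complex.I) - Real.log T • kc 0)‖ := by
      rw [e1]; exact norm_sub_le _ _
    have e4 := norm_sub_le (h ((t:ℂ) * Complex.I)) (h ((T:ℂ) * Complex.I))
    rw [e2] at e3
    linarith
  have hdiv : M / ‖kc 0‖ < Real.log t - Real.log T := by linarith
  have hlt : M < (Real.log t - Real.log T) * ‖kc 0‖ := (div_lt_iff₀ hkn).mp hdiv
  have : (Real.log t - Real.log T) * ‖kc 0‖ < M := by
    rw [hMdef]; linarith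
  linarith
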